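/- Context lemma for the non-deterministic simply-typed λY-calculus with tree constants: for open terms x₁:κ₁,…,x_n:κ_n ⊢ u, u' : κ with κ = κ_{n+1} → ⋯ → κ_ℓ → o, the observational preorder u ≲ u' (defined via all closing contexts of base type, with trees compared up to ∼ᵥ) holds if and only if for all closed argument terms U₁,…,U_ℓ of the respective types and every tree π with (λx₁…λx_n.u) U₁ ⋯ U_ℓ →* π, there exists π' with (λx₁…λx_n.u') U₁ ⋯ U_ℓ →* π' and π ∼ᵥ π'. -/

import Mathlib

/-- Sorts (simple types): κ ::= o | κ₁ → κ₂. -/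
inductive STy where
  | o : STy
  | arr : STy → STy → STy
deriving DecidableEq

/-- The sort o → ⋯ → o → o with n arguments. -/
def tyOfArity : Nat → STy
  | 0 => .o
  | n + 1 => .arr .o (tyOfArity n)

/-- De Bruijn variables: proofs of membership of a sort in a context. -/
inductive Lk : List STy → STy → Type where
  | hd {Γ κ} : Lk (κ :: Γ) κ
  | tl {Γ κ κ'} : Lk Γ κ → Lk (κ' :: Γ) κ

/-- Intrinsically typed λY-terms over tree constructors α (with arities ar),
    with a binary non-deterministic choice +_κ and fixpoint combinators Y_κ at
    every sort. -/
inductive LTm (α : Type) (ar : α → Nat) : List STy → STy → Type where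
  | var {Γ κ} : Lk Γ κ → LTm α ar Γ κ
  | lam {Γ κ₁ κ₂} : LTm α ar (κ₁ :: Γ) κ₂ → LTm α ar Γ (.arr κ₁ κ₂)
  | app {Γ κ₁ κ₂} : LTm α ar Γ (.arr κ₁ κ₂) → LTm α ar Γ κ₁ → LTm α ar Γ κ₂
  | cht {Γ κ} : LTm α ar Γ (.arr κ (.arr κ κ))
  | fix {Γ κ} : LTm α ar Γ (.arr (.arr κ κ) κ)
  | cst {Γ} (a : α) : LTm α ar Γ (tyOfArity (ar a))

/-- Extension of a renaming under a binder. -/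
def extR {Γ Δ : List STy} {κ' : STy} (f : ∀ {κ}, Lk Γ κ → Lk Δ κ) :
    ∀ {κ}, Lk (κ' :: Γ) κ → Lk (κ' :: Δ) κ
  | _, .hd => .hd
  | _, .tl y => .tl (f y)

/-- Renaming. -/
def LTm.rename {α : Type} {ar : α → Nat} :
    ∀ {Γ Δ : List STy} {κ}, (∀ {κ'}, Lk Γ κ' → Lk Δ κ') →
      LTm α ar Γ κ → LTm α ar Δ κ
  | _, _, _, f, .var x => .var (f x)
  | _, _, _, f, .lam b => .lam (b.rename (fun {_} x => extR (fun y => f y) x))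
  | _, _, _, f, .app s t => .app (s.rename f) (t.rename f)
  | _, _, _, _, .cht => .cht
  | _, _, _, _, .fix => .fix
  | _, _, _, _, .cst a => .cst a

/-- Extension of a substitution under a binder. -/
def extS {α : Type} {ar : α → Nat} {Γ Δ : List STy} {κ' : STy}
    (σ : ∀ {κ}, Lk Γ κ → LTm α ar Δ κ) :
    ∀ {κ}, Lk (κ' :: Γ) κ → LTm α ar (κ' :: Δ) κ
  | _, .hd => .var .hd
  | _, .tl y => (σ y).rename (fun z => .tl z)

/-- Simultaneous substitution. -/
def LTm.subs {α : Type} {ar : α → Nat} :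
    ∀ {Γ Δ : List STy} {κ}, (∀ {κ'}, Lk Γ κ' → LTm α ar Δ κ') →
      LTm α ar Γ κ → LTm α ar Δ κ
  | _, _, _, σ, .var x => σ x
  | _, _, _, σ, .lam b => .lam (b.subs (fun {_} x => extS (fun y => σ y) x))
  | _, _, _, σ, .app s t => .app (s.subs σ) (t.subs σ)
  | _, _, _, _, .cht => .cht
  | _, _, _, _, .fix => .fix
  | _, _, _, _, .cst a => .cst a

/-- The substitution sending the last-bound variable to t. -/
def varCase {α : Type} {ar : α → Nat} {Γ : List STy} {κ₁ : STy}
    (t : LTm α ar Γ κ₁) : ∀ {κ}, Lk (κ₁ :: Γ) κ → LTm α ar Γ κ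
  | _, .hd => t
  | _, .tl y => .var y

/-- Substitution of a single term for the last-bound variable. -/
def subst1 {α : Type} {ar : α → Nat} {Γ : List STy} {κ₁ κ₂ : STy}
    (t : LTm α ar Γ κ₁) (b : LTm α ar (κ₁ :: Γ) κ₂) : LTm α ar Γ κ₂ :=
  b.subs (fun {_} x => varCase t x)

/-- The head of the term is a tree constructor. -/
inductive ConstHead {α : Type} {ar : α → Nat} :
    ∀ {Γ κ}, LTm α ar Γ κ → Prop where
  | cst {Γ a} : ConstHead (Γ := Γ) (.cst a)
  | app {Γ κ₁ κ₂} {s : LTm α ar Γ (.arr κ₁ κ₂)} {t} :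
      ConstHead s → ConstHead (.app s t)

/-- Call-by-name non-deterministic reduction of closed λY-terms: β-reduction,
    Y f → f (Y f), resolution of choices, reduction of the head, and reduction
    of the arguments of a tree constructor. -/
inductive LRed {α : Type} {ar : α → Nat} :
    ∀ {κ}, LTm α ar [] κ → LTm α ar [] κ → Prop where
  | beta {κ₁ κ₂} {b : LTm α ar [κ₁] κ₂} {t} :
      LRed (.app (.lam b) t) (subst1 t b)
  | fixR {κ} {f : LTm α ar [] (.arr κ κ)} :
      LRed (.app .fix f) (.app f (.app .fix f))
  | chL {κ} {s t : LTm α ar [] κ} : LRed (.app (.app .cht s) t) s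
  | chR {κ} {s t : LTm α ar [] κ} : LRed (.app (.app .cht s) t) t
  | appL {κ₁ κ₂} {s s' : LTm α ar [] (.arr κ₁ κ₂)} {t} :
      LRed s s' → LRed (.app s t) (.app s' t)
  | appR {κ₁ κ₂} {s : LTm α ar [] (.arr κ₁ κ₂)} {t t'} :
      ConstHead s → LRed t t' → LRed (.app s t) (.app s t')

/-- Many-step reduction. -/
def LRedStar {α : Type} {ar : α → Nat} {κ : STy} :
    LTm α ar [] κ → LTm α ar [] κ → Prop :=
  Relation.ReflTransGen LRed

/-- Trees over the ranked alphabet (α, ar). -/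
inductive GTree (α : Type) (ar : α → Nat) : Type where
  | mk (a : α) (f : Fin (ar a) → GTree α ar)

/-- Full application of a term of sort o^n → o to n arguments. -/
def appN {α : Type} {ar : α → Nat} :
    ∀ n, LTm α ar [] (tyOfArity n) → (Fin n → LTm α ar [] .o) →
      LTm α ar [] .o
  | 0, t, _ => t
  | n + 1, t, f => appN n (.app t (f 0)) (fun i => f i.succ)

/-- A tree as a closed term of base sort. -/
def GTree.toTm {α : Type} {ar : α → Nat} : GTree α ar → LTm α ar [] .o
  | .mk a f => appN (ar a) (.cst a) (fun i => (f i).toTm)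

section
variable {α : Type} {ar : α → Nat} (br e : α)
  (hbr : ar br = 2) (he : ar e = 0)

/-- The tree br π₁ π₂. -/
def brT (π₁ π₂ : GTree α ar) : GTree α ar :=
  .mk br (fun i => if (Fin.cast hbr i : Fin 2) = 0 then π₁ else π₂)

/-- The tree e. -/
def eT : GTree α ar := .mk e (fun i => (Fin.cast he i).elim0)

/-- The least congruence ∼ᵥ on trees with π ∼ᵥ br e π and associativity
    of br. -/
inductive SimV : GTree α ar → GTree α ar → Prop where
  | refl (t) : SimV t t
  | symm {t t'} : SimV t t' → SimV t' t
  | trans {t₁ t₂ t₃} : SimV t₁ t₂ → SimV t₂ t₃ → SimV t₁ t₃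
  | eps (t) : SimV t (brT br hbr (eT e he) t)
  | assoc (a b c) : SimV (brT br hbr a (brT br hbr b c))
      (brT br hbr (brT br hbr a b) c)
  | congr {a f g} : (∀ i, SimV (f i) (g i)) → SimV (.mk a f) (.mk a g)

end

/-- foldArr [κ₁,…,κ_n] κ = κ₁ → ⋯ → κ_n → κ (κ₁ is the outermost binder). -/
def foldArr : List STy → STy → STy
  | [], κ => κ
  | κ' :: Γ, κ => foldArr Γ (.arr κ' κ)

/-- λ-closure λx₁…λx_n.u of an open term. -/
def closeTm {α : Type} {ar : α → Nat} {κ : STy} :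
    ∀ Γ, LTm α ar Γ κ → LTm α ar [] (foldArr Γ κ)
  | [], t => t
  | _ :: Γ, t => closeTm Γ (.lam t)

/-- A list of closed argument terms fully consuming a sort. -/
inductive Args (α : Type) (ar : α → Nat) : STy → Type where
  | nil : Args α ar .o
  | cons {κ₁ κ₂} : LTm α ar [] κ₁ → Args α ar κ₂ → Args α ar (.arr κ₁ κ₂)

/-- Full application of a closed term to a list of closed arguments. -/
def applyArgs {α : Type} {ar : α → Nat} :
    ∀ {κ}, LTm α ar [] κ → Args α ar κ → LTm α ar [] .o
  | _, t, .nil => t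
  | _, t, .cons u as => applyArgs (.app t u) as

/-- The observational preorder u ≲ u': every tree reachable from C(λx̄.u), for
    any closing context C of base sort, is matched up to ∼ᵥ by a tree reachable
    from C(λx̄.u'). -/
def ObsLe {α : Type} {ar : α → Nat} (br e : α) (hbr : ar br = 2)
    (he : ar e = 0) {Γ : List STy} {κ : STy} (u u' : LTm α ar Γ κ) : Prop :=
  ∀ (C : LTm α ar [] (.arr (foldArr Γ κ) .o)) (π : GTree α ar),
    LRedStar (.app C (closeTm Γ u)) π.toTm →
    ∃ π', LRedStar (.app C (closeTm Γ u')) π'.toTm ∧ SimV br e hbr he π π'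

namespace CtxLem

variable {α : Type} {ar : α → Nat}

/-! ### Substitution boilerplate -/

theorem renameExt {Γ κ} (t : LTm α ar Γ κ) :
    ∀ {Δ} (f g : ∀ {κ'}, Lk Γ κ' → Lk Δ κ'),
      (∀ κ' (x : Lk Γ κ'), f x = g x) →
      t.rename (fun x => f x) = t.rename (fun x => g x) := by
  induction t with
  | var x => intro Δ f g h; exact congrArg LTm.var (h _ x)
  | lam b ih =>
      intro Δ f g h
      simp only [LTm.rename]
      refine congrArg LTm.lam (ih _ _ ?_)
      intro κ' x; cases x with
      | hd => rfl
      | tl y => exact congrArg Lk.tl (h _ y)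
  | app s t ihs iht =>
      intro Δ f g h
      simp only [LTm.rename]
      rw [ihs _ _ h, iht _ _ h]
  | cht => intros; rfl
  | fix => intros; rfl
  | cst => intros; rfl

theorem subsExt {Γ κ} (t : LTm α ar Γ κ) :
    ∀ {Δ} (σ τ : ∀ {κ'}, Lk Γ κ' → LTm α ar Δ κ'),
      (∀ κ' (x : Lk Γ κ'), σ x = τ x) →
      t.subs (fun x => σ x) = t.subs (fun x => τ x) := by
  induction t with
  | var x => intro Δ σ τ h; exact h _ x
  | lam b ih =>
      intro Δ σ τ h
      simp only [LTm.subs]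
      refine congrArg LTm.lam (ih _ _ ?_)
      intro κ' x; cases x with
      | hd => rfl
      | tl y => exact congrArg (fun u => LTm.rename (fun z => Lk.tl z) u) (h _ y)
  | app s t ihs iht =>
      intro Δ σ τ h
      simp only [LTm.subs]
      rw [ihs _ _ h, iht _ _ h]
  | cht => intros; rfl
  | fix => intros; rfl
  | cst => intros; rfl

theorem renameRename {Γ κ} (t : LTm α ar Γ κ) :
    ∀ {Δ Θ} (f : ∀ {κ'}, Lk Γ κ' → Lk Δ κ') (g : ∀ {κ'}, Lk Δ κ' → Lk Θ κ'),
      (t.rename (fun x => f x)).rename (fun x => g x) = t.rename (fun x => g (f x)) := by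
  induction t with
  | var x => intros; rfl
  | lam b ih =>
      intro Δ Θ f g
      simp only [LTm.rename]
      refine congrArg LTm.lam ?_
      rw [ih]
      refine renameExt b _ _ ?_
      intro κ' x; cases x with
      | hd => rfl
      | tl y => rfl
  | app s t ihs iht =>
      intro Δ Θ f g
      simp only [LTm.rename]
      rw [ihs, iht]
  | cht => intros; rfl
  | fix => intros; rfl
  | cst => intros; rfl

theorem subsRename {Γ κ} (t : LTm α ar Γ κ) :
    ∀ {Δ Θ} (f : ∀ {κ'}, Lk Γ κ' → Lk Δ κ') (σ : ∀ {κ'}, Lk Δ κ' → LTm α ar Θ κ'),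
      (t.rename (fun x => f x)).subs (fun x => σ x) = t.subs (fun x => σ (f x)) := by
  induction t with
  | var x => intros; rfl
  | lam b ih =>
      intro Δ Θ f σ
      simp only [LTm.rename, LTm.subs]
      refine congrArg LTm.lam ?_
      rw [ih]
      refine subsExt b _ _ ?_
      intro κ' x; cases x with
      | hd => rfl
      | tl y => rfl
  | app s t ihs iht =>
      intro Δ Θ f σ
      simp only [LTm.rename, LTm.subs]
      rw [ihs, iht]
  | cht => intros; rfl
  | fix => intros; rfl
  | cst => intros; rfl

theorem renameSubs {Γ κ} (t : LTm α ar Γ κ) :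
    ∀ {Δ Θ} (σ : ∀ {κ'}, Lk Γ κ' → LTm α ar Δ κ') (g : ∀ {κ'}, Lk Δ κ' → Lk Θ κ'),
      (t.subs (fun x => σ x)).rename (fun x => g x) = t.subs (fun x => (σ x).rename (fun z => g z)) := by
  induction t with
  | var x => intros; rfl
  | lam b ih =>
      intro Δ Θ σ g
      simp only [LTm.subs, LTm.rename]
      refine congrArg LTm.lam ?_
      rw [ih]
      refine subsExt b _ _ ?_
      intro κ' x; cases x with
      | hd => rfl
      | tl y =>
          show ((σ y).rename fun z => Lk.tl z).rename (fun x => extR (fun z => g z) x)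
              = ((σ y).rename fun z => g z).rename fun z => Lk.tl z
          rw [renameRename, renameRename]
          exact renameExt _ _ _ (fun κ'' x => rfl)
  | app s t ihs iht =>
      intro Δ Θ σ g
      simp only [LTm.subs, LTm.rename]
      rw [ihs, iht]
  | cht => intros; rfl
  | fix => intros; rfl
  | cst => intros; rfl

theorem subsSubs {Γ κ} (t : LTm α ar Γ κ) :
    ∀ {Δ Θ} (σ : ∀ {κ'}, Lk Γ κ' → LTm α ar Δ κ') (τ : ∀ {κ'}, Lk Δ κ' → LTm α ar Θ κ'),
      (t.subs (fun x => σ x)).subs (fun x => τ x) = t.subs (fun x => (σ x).subs (fun z => τ z)) := by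
  induction t with
  | var x => intros; rfl
  | lam b ih =>
      intro Δ Θ σ τ
      simp only [LTm.subs]
      refine congrArg LTm.lam ?_
      rw [ih]
      refine subsExt b _ _ ?_
      intro κ' x; cases x with
      | hd => rfl
      | tl y =>
          show ((σ y).rename fun z => Lk.tl z).subs (fun x => extS (fun z => τ z) x)
              = ((σ y).subs fun z => τ z).rename fun z => Lk.tl z
          rw [subsRename, renameSubs]
          exact subsExt _ _ _ (fun κ'' x => rfl)
  | app s t ihs iht =>
      intro Δ Θ σ τ
      simp only [LTm.subs]
      rw [ihs, iht]
  | cht => intros; rfl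
  | fix => intros; rfl
  | cst => intros; rfl

theorem subsVar {Γ κ} (t : LTm α ar Γ κ) :
    t.subs (fun x => .var x) = t := by
  induction t with
  | var x => rfl
  | lam b ih =>
      simp only [LTm.subs]
      refine congrArg LTm.lam ?_
      have h1 := subsExt b (fun x => extS (fun z => LTm.var z) x) (fun x => LTm.var x)
        (by intro κ' x; cases x with
            | hd => rfl
            | tl y => rfl)
      exact h1.trans ih
  | app s t ihs iht => simp only [LTm.subs]; rw [ihs, iht]
  | cht => rfl
  | fix => rfl
  | cst => rfl

theorem closedSubs {κ} (t : LTm α ar [] κ) (σ : ∀ {κ'}, Lk ([] : List STy) κ' → LTm α ar [] κ') :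
    t.subs (fun x => σ x) = t := by
  rw [subsExt t σ (fun x => .var x) (fun κ' x => nomatch x)]
  exact subsVar t

/-! ### Derived substitution facts -/

def consS {Γ κ₁} (s : LTm α ar [] κ₁) (σ : ∀ {κ'}, Lk Γ κ' → LTm α ar [] κ') :
    ∀ {κ'}, Lk (κ₁ :: Γ) κ' → LTm α ar [] κ'
  | _, .hd => s
  | _, .tl y => σ y

theorem subst1Subs {Γ κ₁ κ₂} (b : LTm α ar (κ₁ :: Γ) κ₂) (s : LTm α ar [] κ₁)
    (σ : ∀ {κ'}, Lk Γ κ' → LTm α ar [] κ') :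
    subst1 s (b.subs (fun x => extS (fun z => σ z) x)) = b.subs (fun x => consS s σ x) := by
  unfold subst1
  rw [subsSubs]
  refine subsExt b _ _ ?_
  intro κ' x; cases x with
  | hd => rfl
  | tl y =>
      show ((σ y).rename fun z => Lk.tl z).subs (fun x => varCase s x) = σ y
      rw [subsRename]
      exact (subsExt _ _ (fun x => LTm.var x) (fun κ'' x => rfl)).trans (subsVar _)

def emptyRen {Δ} : ∀ {κ'}, Lk ([] : List STy) κ' → Lk Δ κ' := fun x => nomatch x

/-- Weakening of a closed term. -/
def wk {Δ κ} (t : LTm α ar [] κ) : LTm α ar Δ κ := t.rename (fun x => emptyRen x)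

theorem subst1Wk {τ κ} (N : LTm α ar [] τ) (u : LTm α ar [] κ) :
    subst1 N (wk u) = u := by
  unfold subst1 wk
  rw [subsRename]
  exact closedSubs u _


/-! ### Spines -/

def sArgs : ∀ {Γ κ}, LTm α ar Γ κ → List (Σ κ', LTm α ar Γ κ')
  | _, _, .app s u => sArgs s ++ [⟨_, u⟩]
  | _, _, _ => []

def sHead : ∀ {Γ κ}, LTm α ar Γ κ → Option α
  | _, _, .app s _ => sHead s
  | _, _, .cst a => some a
  | _, _, _ => none

theorem sHeadApp {Γ κ₁ κ₂} (s : LTm α ar Γ (.arr κ₁ κ₂)) (u : LTm α ar Γ κ₁) :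
    sHead (.app s u) = sHead s := rfl

theorem constHeadSHead {Γ κ} {t : LTm α ar Γ κ} (h : ConstHead t) :
    ∃ a, sHead t = some a := by
  induction h with
  | cst => exact ⟨_, rfl⟩
  | app _ ih => exact ih

theorem noConstHead {Γ κ} {t : LTm α ar Γ κ} (h : ConstHead t) (hn : sHead t = none) :
    False := by
  obtain ⟨a, ha⟩ := constHeadSHead h
  rw [hn] at ha
  cases ha

/-! ### Reduction basics -/

def RedN : ℕ → ∀ {κ}, LTm α ar [] κ → LTm α ar [] κ → Prop
  | 0, _, t, t' => t = t'
  | n+1, _, t, t'' => ∃ t', LRed t t' ∧ RedN n t' t''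

theorem redNStar {κ} : ∀ {n} {t t' : LTm α ar [] κ}, RedN n t t' → LRedStar t t' := by
  intro n
  induction n with
  | zero => intro t t' h; exact (show t = t' from h) ▸ .refl
  | succ n ih =>
      intro t t' h
      obtain ⟨w, h1, h2⟩ := h
      exact Relation.ReflTransGen.head h1 (ih h2)

theorem redNSnoc {κ} : ∀ {n} {t t' t'' : LTm α ar [] κ},
    RedN n t t' → LRed t' t'' → RedN (n+1) t t'' := by
  intro n
  induction n with
  | zero => intro t t' t'' h h'; exact ⟨t'', (show t = t' from h) ▸ h', rfl⟩
  | succ n ih =>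
      intro t t' t'' h h'
      obtain ⟨w, h1, h2⟩ := h
      exact ⟨w, h1, ih h2 h'⟩

theorem starRedN {κ} {t t' : LTm α ar [] κ} (h : LRedStar t t') : ∃ n, RedN n t t' := by
  induction h with
  | refl => exact ⟨0, rfl⟩
  | tail h1 h2 ih =>
      obtain ⟨n, hn⟩ := ih
      exact ⟨n+1, redNSnoc hn h2⟩

theorem constHeadRed {κ} {t v : LTm α ar [] κ} (hc : ConstHead t) : LRed t v → ConstHead v := by
  induction hc with
  | cst => intro h; cases h
  | app hs ih =>
      intro h
      cases h with
      | beta => exact (noConstHead hs rfl).elim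
      | fixR => exact (noConstHead hs rfl).elim
      | chL => exact (noConstHead hs rfl).elim
      | chR => exact (noConstHead hs rfl).elim
      | appL h' => exact .app (ih h')
      | appR _ _ => exact .app hs

theorem constHeadStar {κ} {t v : LTm α ar [] κ} (hc : ConstHead t) (h : LRedStar t v) :
    ConstHead v := by
  induction h with
  | refl => exact hc
  | tail _ h2 ih => exact constHeadRed ih h2

theorem appNoRed {κ₁ κ₂} {t : LTm α ar [] (.arr κ₁ κ₂)} {u : LTm α ar [] κ₁}
    (hc : ConstHead t) (hn : ∀ v, ¬ LRed t v) (hu : ∀ v, ¬ LRed u v) :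
    ∀ v, ¬ LRed (.app t u) v := by
  intro v h
  cases h with
  | beta => exact noConstHead hc rfl
  | fixR => exact noConstHead hc rfl
  | chL => exact noConstHead hc rfl
  | chR => exact noConstHead hc rfl
  | appL h' => exact hn _ h'
  | appR _ h' => exact hu _ h'

theorem appNNormal : ∀ (n) (t : LTm α ar [] (tyOfArity n)) (g : Fin n → LTm α ar [] .o),
    ConstHead t → (∀ v, ¬ LRed t v) → (∀ i v, ¬ LRed (g i) v) →
    ∀ v, ¬ LRed (appN n t g) v := by
  intro n
  induction n with
  | zero => intro t g hc hn hg v h; exact hn v h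
  | succ n ih =>
      intro t g hc hn hg v h
      exact ih (.app t (g 0)) (fun i => g i.succ) (.app hc)
        (appNoRed hc hn (hg 0)) (fun i => hg i.succ) v h

theorem treeNormal (π : GTree α ar) : ∀ v, ¬ LRed π.toTm v := by
  induction π with
  | mk a f ih => exact appNNormal _ _ _ .cst (fun v h => nomatch h) (fun i => ih i)

theorem sHeadAppN : ∀ n (t : LTm α ar [] (tyOfArity n)) (g : Fin n → LTm α ar [] .o),
    sHead (appN n t g) = sHead t := by
  intro n
  induction n with
  | zero => intros; rfl
  | succ n ih => intro t g; exact (ih (.app t (g 0)) (fun i => g i.succ)).trans (sHeadApp _ _)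

theorem sArgsAppN : ∀ n (t : LTm α ar [] (tyOfArity n)) (g : Fin n → LTm α ar [] .o),
    sArgs (appN n t g) =
      sArgs t ++ List.ofFn (fun i => (⟨STy.o, g i⟩ : Σ κ', LTm α ar [] κ')) := by
  intro n
  induction n with
  | zero => intro t g; simp [appN, List.ofFn_zero]; rfl
  | succ n ih =>
      intro t g
      have h0 : appN (n+1) t g = appN n (.app t (g 0)) (fun i => g i.succ) := rfl
      rw [h0, ih]
      have h1 : sArgs (α := α) (ar := ar) (.app t (g 0)) = sArgs t ++ [⟨STy.o, g 0⟩] := rfl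
      rw [h1, List.append_assoc, List.ofFn_succ]
      rfl

theorem appNCons {j} (t : LTm α ar [] (tyOfArity (j+1))) (s : LTm α ar [] .o)
    (g : Fin j → LTm α ar [] .o) :
    appN (j+1) t (Fin.cons s g) = appN j (.app t s) g := by
  have h0 : appN (j+1) t (Fin.cons s g) =
      appN j (.app t (Fin.cons (α := fun _ => LTm α ar [] STy.o) s g 0))
        (fun i => Fin.cons (α := fun _ => LTm α ar [] STy.o) s g i.succ) := rfl
  rw [h0]
  have h1 : (fun i => Fin.cons (α := fun _ => LTm α ar [] STy.o) s g i.succ) = g :=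
    funext fun i => Fin.cons_succ (α := fun _ => LTm α ar [] STy.o) s g i
  rw [h1]
  rfl

/-! ### Star congruences -/

theorem starAppL {κ₁ κ₂} {s s' : LTm α ar [] (.arr κ₁ κ₂)} (t : LTm α ar [] κ₁)
    (h : LRedStar s s') : LRedStar (.app s t) (.app s' t) := by
  induction h with
  | refl => exact .refl
  | tail _ h2 ih => exact ih.tail (.appL h2)

theorem starAppR {κ₁ κ₂} {s : LTm α ar [] (.arr κ₁ κ₂)} {t t' : LTm α ar [] κ₁}
    (hc : ConstHead s) (h : LRedStar t t') : LRedStar (.app s t) (.app s t') := by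
  induction h with
  | refl => exact .refl
  | tail _ h2 ih => exact ih.tail (.appR hc h2)

theorem appNStar : ∀ n {t t' : LTm α ar [] (tyOfArity n)} {g h : Fin n → LTm α ar [] .o},
    ConstHead t → LRedStar t t' → (∀ i, LRedStar (g i) (h i)) →
    LRedStar (appN n t g) (appN n t' h) := by
  intro n
  induction n with
  | zero => intro t t' g h hc hs _; exact hs
  | succ n ih =>
      intro t t' g h hc hs hg
      show LRedStar (appN n (.app t (g 0)) fun i => g i.succ)
        (appN n (.app t' (h 0)) fun i => h i.succ)
      refine ih (.app hc) ?_ (fun i => hg i.succ)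
      exact (starAppL _ hs).trans (starAppR (constHeadStar hc hs) (hg 0))

/-! ### Head steps -/

inductive HStep : ∀ {κ}, LTm α ar [] κ → LTm α ar [] κ → Prop where
  | beta {κ₁ κ₂} {b : LTm α ar [κ₁] κ₂} {t} : HStep (.app (.lam b) t) (subst1 t b)
  | fixR {κ} {f : LTm α ar [] (.arr κ κ)} : HStep (.app .fix f) (.app f (.app .fix f))
  | appL {κ₁ κ₂} {s s' : LTm α ar [] (.arr κ₁ κ₂)} {t} : HStep s s' → HStep (.app s t) (.app s' t)

theorem hstepRed {κ} {t t₀ : LTm α ar [] κ} (h : HStep t t₀) : LRed t t₀ := by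
  induction h with
  | beta => exact .beta
  | fixR => exact .fixR
  | appL _ ih => exact .appL ih

theorem constHeadNoHStep {κ} {s s₀ : LTm α ar [] κ} (hc : ConstHead s) (h : HStep s s₀) :
    False := by
  induction h with
  | beta => exact noConstHead hc rfl
  | fixR => exact noConstHead hc rfl
  | appL _ ih => cases hc with | app h2 => exact ih h2

theorem hstepUnique {κ} {t t₀ : LTm α ar [] κ} (h : HStep t t₀) :
    ∀ v, LRed t v → v = t₀ := by
  induction h with
  | beta =>
      intro v hv
      cases hv with
      | beta => rfl
      | appL h' => cases h'
      | appR hc _ => exact (noConstHead hc rfl).elim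
  | fixR =>
      intro v hv
      cases hv with
      | fixR => rfl
      | appL h' => cases h'
      | appR hc _ => exact (noConstHead hc rfl).elim
  | appL h ih =>
      intro v hv
      cases hv with
      | beta => cases h
      | fixR => cases h
      | chL => cases h with | appL h2 => cases h2
      | chR => cases h with | appL h2 => cases h2
      | appL h' => rw [ih _ h']
      | appR hc _ => exact (constHeadNoHStep hc h).elim

/-! ### Choice heads -/

inductive ChHead : ∀ {κ}, LTm α ar [] κ → LTm α ar [] κ → LTm α ar [] κ → Prop where
  | base {κ} {s t : LTm α ar [] κ} : ChHead (.app (.app .cht s) t) s t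
  | app {κ₁ κ₂} {c s t : LTm α ar [] (.arr κ₁ κ₂)} {u} :
      ChHead c s t → ChHead (.app c u) (.app s u) (.app t u)

theorem chHeadRedL {κ} {c s t : LTm α ar [] κ} (h : ChHead c s t) : LRed c s := by
  induction h with
  | base => exact .chL
  | app _ ih => exact .appL ih

theorem chHeadRedR {κ} {c s t : LTm α ar [] κ} (h : ChHead c s t) : LRed c t := by
  induction h with
  | base => exact .chR
  | app _ ih => exact .appL ih

theorem chHeadSHead {κ} {c s t : LTm α ar [] κ} (h : ChHead c s t) : sHead c = none := by
  induction h with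
  | base => rfl
  | app _ ih => exact (sHeadApp _ _).trans ih

theorem chHeadNotConst {κ} {c s t : LTm α ar [] κ} (h : ChHead c s t) (hc : ConstHead c) :
    False := noConstHead hc (chHeadSHead h)

theorem chHeadCases {κ} {c s t : LTm α ar [] κ} (h : ChHead c s t) :
    ∀ v, LRed c v → v = s ∨ v = t := by
  induction h with
  | base =>
      intro v hv
      cases hv with
      | chL => exact .inl rfl
      | chR => exact .inr rfl
      | appL h' =>
          cases h' with
          | appL h2 => cases h2
          | appR hc _ => exact (noConstHead hc rfl).elim
      | appR hc _ => exact (noConstHead hc rfl).elim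
  | app h ih =>
      intro v hv
      cases hv with
      | beta => cases h
      | fixR => cases h
      | chL => cases h with | app h2 => cases h2
      | chR => cases h with | app h2 => cases h2
      | appL h' =>
          rcases ih _ h' with h1 | h1
          · exact .inl (by rw [h1])
          · exact .inr (by rw [h1])
      | appR hc _ => exact (chHeadNotConst h hc).elim


/-! ### Step-indexed simulation and logical relation -/

section Sim

variable (br e : α) (hbr : ar br = 2) (he : ar e = 0)

def SimON (n : ℕ) (t t' : LTm α ar [] .o) : Prop :=
  ∀ m, m ≤ n → ∀ π : GTree α ar, RedN m t π.toTm →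
    ∃ π', LRedStar t' π'.toTm ∧ SimV br e hbr he π π'

def LR : ℕ → ∀ κ, LTm α ar [] κ → LTm α ar [] κ → Prop
  | n, .o, t, t' => SimON br e hbr he n t t'
  | n, .arr κ₁ κ₂, t, t' =>
      ∀ m, m ≤ n → ∀ s s', LR m κ₁ s s' → LR m κ₂ (.app t s) (.app t' s')

theorem simonMono {n m : ℕ} (h : m ≤ n) {t t'} (hs : SimON br e hbr he n t t') :
    SimON br e hbr he m t t' :=
  fun k hk π hr => hs k (hk.trans h) π hr

theorem simonShift {n} {t t₁ t' : LTm α ar [] .o} (hs : SimON br e hbr he (n+1) t t')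
    (h : LRed t t₁) : SimON br e hbr he n t₁ t' :=
  fun k hk π hr => hs (k+1) (Nat.succ_le_succ hk) π ⟨t₁, h, hr⟩

theorem lrMono : ∀ {κ} {n m : ℕ}, m ≤ n → ∀ {t t'},
    LR br e hbr he n κ t t' → LR br e hbr he m κ t t' := by
  intro κ
  cases κ with
  | o => intro n m h t t' hl; exact simonMono br e hbr he h hl
  | arr κ₁ κ₂ => intro n m h t t' hl k hk s s' hs; exact hl k (hk.trans h) s s' hs

theorem lrHStep0 : ∀ {κ} (t t₀ t' : LTm α ar [] κ), HStep t t₀ →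
    LR br e hbr he 0 κ t t' := by
  intro κ
  induction κ with
  | o =>
      intro t t₀ t' h m hm π hr
      have hm0 : m = 0 := Nat.le_zero.mp hm
      subst hm0
      have h0 : t = π.toTm := hr
      exact absurd (h0 ▸ hstepRed h) (treeNormal π t₀)
  | arr κ₁ κ₂ ih₁ ih₂ =>
      intro t t₀ t' h m hm s s' hs
      have hm0 : m = 0 := Nat.le_zero.mp hm
      subst hm0
      exact ih₂ _ _ _ (h.appL)

theorem lrHStepSame : ∀ {κ} {t t₀ t' : LTm α ar [] κ}, HStep t t₀ → ∀ {n},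
    LR br e hbr he n κ t₀ t' → LR br e hbr he n κ t t' := by
  intro κ
  induction κ with
  | o =>
      intro t t₀ t' h n hl m hm π hr
      cases m with
      | zero =>
          have h0 : t = π.toTm := hr
          exact absurd (h0 ▸ hstepRed h) (treeNormal π t₀)
      | succ m =>
          obtain ⟨w, h1, h2⟩ := hr
          have hw : w = t₀ := hstepUnique h w h1
          subst hw
          exact hl m (Nat.le_of_succ_le hm) π h2
  | arr κ₁ κ₂ ih₁ ih₂ =>
      intro t t₀ t' h n hl m hm s s' hs
      exact ih₂ (h.appL) (hl m hm s s' hs)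

theorem lrHStepSucc : ∀ {κ} {t t₀ t' : LTm α ar [] κ}, HStep t t₀ → ∀ {n},
    LR br e hbr he n κ t₀ t' → LR br e hbr he (n+1) κ t t' := by
  intro κ
  induction κ with
  | o =>
      intro t t₀ t' h n hl m hm π hr
      cases m with
      | zero =>
          have h0 : t = π.toTm := hr
          exact absurd (h0 ▸ hstepRed h) (treeNormal π t₀)
      | succ m =>
          obtain ⟨w, h1, h2⟩ := hr
          have hw : w = t₀ := hstepUnique h w h1
          subst hw
          exact hl m (Nat.le_of_succ_le_succ hm) π h2
  | arr κ₁ κ₂ ih₁ ih₂ =>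
      intro t t₀ t' h n hl m hm s s' hs
      cases m with
      | zero => exact lrHStep0 br e hbr he _ _ _ (h.appL)
      | succ m =>
          refine ih₂ (h.appL) ?_
          exact hl m (Nat.le_of_succ_le_succ hm) s s'
            (lrMono br e hbr he (Nat.le_succ m) hs)

theorem lrRStep : ∀ {κ} {a b c : LTm α ar [] κ}, LRed b c → ∀ {n},
    LR br e hbr he n κ a c → LR br e hbr he n κ a b := by
  intro κ
  induction κ with
  | o =>
      intro a b c h n hl m hm π hr
      obtain ⟨π', h1, h2⟩ := hl m hm π hr
      exact ⟨π', Relation.ReflTransGen.head h h1, h2⟩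
  | arr κ₁ κ₂ ih₁ ih₂ =>
      intro a b c h n hl m hm s s' hs
      exact ih₂ (LRed.appL h) (hl m hm s s' hs)

theorem lrChHead : ∀ {κ} {c c' s t s' t' : LTm α ar [] κ}, ChHead c s t → ChHead c' s' t' →
    ∀ {n}, LR br e hbr he n κ s s' → LR br e hbr he n κ t t' →
    LR br e hbr he n κ c c' := by
  intro κ
  induction κ with
  | o =>
      intro c c' s t s' t' hc hc' n hs ht m hm π hr
      cases m with
      | zero =>
          have h0 : c = π.toTm := hr
          exact absurd (h0 ▸ chHeadRedL hc) (treeNormal π s)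
      | succ m =>
          obtain ⟨w, h1, h2⟩ := hr
          rcases chHeadCases hc w h1 with h3 | h3 <;> subst h3
          · obtain ⟨π', p1, p2⟩ := hs m (Nat.le_of_succ_le hm) π h2
            exact ⟨π', Relation.ReflTransGen.head (chHeadRedL hc') p1, p2⟩
          · obtain ⟨π', p1, p2⟩ := ht m (Nat.le_of_succ_le hm) π h2
            exact ⟨π', Relation.ReflTransGen.head (chHeadRedR hc') p1, p2⟩
  | arr κ₁ κ₂ ih₁ ih₂ =>
      intro c c' s t s' t' hc hc' n hs ht m hm u u' hu
      exact ih₂ (hc.app) (hc'.app) (hs m hm u u' hu) (ht m hm u u' hu)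

theorem lrFix {κ} : ∀ n {f f' : LTm α ar [] (.arr κ κ)},
    LR br e hbr he n (.arr κ κ) f f' →
    LR br e hbr he n κ (.app .fix f) (.app .fix f') := by
  intro n
  induction n using Nat.strong_induction_on with
  | _ n ih =>
      intro f f' hf
      cases n with
      | zero => exact lrHStep0 br e hbr he _ _ _ .fixR
      | succ n =>
          refine lrHStepSucc br e hbr he .fixR ?_
          refine lrRStep br e hbr he LRed.fixR ?_
          exact hf n (Nat.le_succ n) _ _
            (ih n (Nat.lt_succ_self n) (lrMono br e hbr he (Nat.le_succ n) hf))

/-! ### Constant-headed applications -/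

inductive CRel (n : ℕ) : ∀ j, LTm α ar [] (tyOfArity j) → LTm α ar [] (tyOfArity j) → Prop where
  | base (a : α) : CRel n (ar a) (.cst a) (.cst a)
  | step {j t t' s s'} : CRel n (j+1) t t' → SimON br e hbr he n s s' →
      CRel n j (.app t s) (.app t' s')

theorem constHeadRedApp {κ₁ κ₂} {t : LTm α ar [] (.arr κ₁ κ₂)} {s : LTm α ar [] κ₁} {v}
    (hch : ConstHead t) (h : LRed (.app t s) v) :
    (∃ w, LRed t w ∧ v = .app w s) ∨ (∃ s₁, LRed s s₁ ∧ v = .app t s₁) := by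
  cases h with
  | beta => exact (noConstHead hch rfl).elim
  | fixR => exact (noConstHead hch rfl).elim
  | chL => exact (noConstHead hch rfl).elim
  | chR => exact (noConstHead hch rfl).elim
  | appL h' => exact .inl ⟨_, h', rfl⟩
  | appR _ h' => exact .inr ⟨_, h', rfl⟩

theorem crelConst {n j t t'} (h : CRel br e hbr he n j t t') :
    ConstHead t ∧ ConstHead t' := by
  induction h with
  | base a => exact ⟨.cst, .cst⟩
  | step _ _ ih => exact ⟨.app ih.1, .app ih.2⟩

theorem crelMono {n m : ℕ} (h : m ≤ n) : ∀ {j t t'},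
    CRel br e hbr he n j t t' → CRel br e hbr he m j t t' := by
  intro j t t' hc
  induction hc with
  | base a => exact .base a
  | step h1 h2 ih => exact .step ih (simonMono br e hbr he h h2)

theorem crelStep {n : ℕ} : ∀ {j t t'}, CRel br e hbr he (n+1) j t t' →
    ∀ v, LRed t v → CRel br e hbr he n j v t' := by
  intro j t t' hc
  induction hc with
  | base a => intro v hv; cases hv
  | step h1 h2 ih =>
      intro v hv
      have hch := (crelConst br e hbr he h1).1
      rcases constHeadRedApp hch hv with ⟨w, hw, hv'⟩ | ⟨s₁, hs₁, hv'⟩ <;> subst hv'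
      · exact .step (ih _ hw) (simonMono br e hbr he (Nat.le_succ n) h2)
      · exact .step (crelMono br e hbr he (Nat.le_succ n) h1)
          (simonShift br e hbr he h2 hs₁)

theorem crelRedN : ∀ (m : ℕ) {n j t t' v}, RedN m t v → m ≤ n →
    CRel br e hbr he n j t t' → CRel br e hbr he (n - m) j v t' := by
  intro m
  induction m with
  | zero =>
      intro n j t t' v hr _ hc
      have h0 : t = v := hr
      subst h0
      simpa using hc
  | succ m ih =>
      intro n j t t' v hr hm hc
      obtain ⟨w, h1, h2⟩ := hr
      cases n with
      | zero => omega
      | succ n =>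
          have hc' := crelStep br e hbr he hc w h1
          have h3 := ih h2 (Nat.le_of_succ_le_succ hm) hc'
          simpa [Nat.succ_sub_succ] using h3

theorem sArgsCst (a : α) : sArgs (α := α) (ar := ar) (Γ := []) (.cst a) = [] := rfl
theorem sHeadCst (a : α) : sHead (α := α) (ar := ar) (Γ := []) (.cst a) = some a := rfl

theorem endLemma : ∀ {q : ℕ} {j} {t t' : LTm α ar [] (tyOfArity j)},
    CRel br e hbr he q j t t' →
    ∀ (g g' : Fin j → LTm α ar [] .o), (∀ i, SimON br e hbr he q (g i) (g' i)) →
    ∀ π : GTree α ar, appN j t g = π.toTm →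
    ∃ π', LRedStar (appN j t' g') π'.toTm ∧ SimV br e hbr he π π' := by
  intro q j t t' hc
  induction hc with
  | base a =>
      intro g g' hg π hπ
      obtain ⟨b, f⟩ := π
      have hπ' : appN (ar a) (.cst a) g = appN (ar b) (.cst b) (fun i => (f i).toTm) := hπ
      have hab : a = b := by
        have h1 := congrArg sHead hπ'
        rw [sHeadAppN, sHeadAppN, sHeadCst, sHeadCst] at h1
        exact Option.some.inj h1
      subst hab
      have hargs : ∀ i, g i = (f i).toTm := by
        have h2 := congrArg sArgs hπ'
        rw [sArgsAppN, sArgsAppN, sArgsCst, List.nil_append, List.nil_append] at h2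
        have h3 := List.ofFn_inj.mp h2
        intro i
        have h4 := congrFun h3 i
        have h5 : g i = (f i).toTm := by simpa using h4
        exact h5
      choose π' hπr hπs using fun i =>
        hg i 0 (Nat.zero_le q) (f i) (hargs i : RedN 0 (g i) ((f i).toTm))
      refine ⟨GTree.mk a π', ?_, ?_⟩
      · exact appNStar _ .cst .refl (fun i => hπr i)
      · exact SimV.congr (fun i => hπs i)
  | @step j₀ t₁ t₁' s s' h1 h2 ih =>
      intro g g' hg π hπ
      rw [← appNCons] at hπ
      have hrel : ∀ i, SimON br e hbr he q
          (Fin.cons (α := fun _ => LTm α ar [] STy.o) s g i)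
          (Fin.cons (α := fun _ => LTm α ar [] STy.o) s' g' i) := by
        intro i
        refine Fin.cases ?_ ?_ i
        · simpa using h2
        · intro k; simpa using hg k
      obtain ⟨π', hr, hs⟩ := ih (Fin.cons s g) (Fin.cons s' g') hrel π hπ
      rw [appNCons] at hr
      exact ⟨π', hr, hs⟩

theorem lrCRel : ∀ (j : ℕ) {n} {t t' : LTm α ar [] (tyOfArity j)},
    CRel br e hbr he n j t t' → LR br e hbr he n (tyOfArity j) t t' := by
  intro j
  induction j with
  | zero =>
      intro n t t' hc m hm π hr
      have hend := crelRedN br e hbr he m hr hm hc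
      exact endLemma br e hbr he hend (fun i => i.elim0) (fun i => i.elim0)
        (fun i => i.elim0) π rfl
  | succ j ih =>
      intro n t t' hc m hm s s' hs
      exact ih (CRel.step (crelMono br e hbr he hm hc) (hs : SimON br e hbr he m s s'))

end Sim

/-! ### Composition with the ground relation, fundamental lemma -/

section Main

variable (br e : α) (hbr : ar br = 2) (he : ar e = 0)

def GR {κ} (t t' : LTm α ar [] κ) : Prop :=
  ∀ as : Args α ar κ, ∀ π : GTree α ar, LRedStar (applyArgs t as) π.toTm →
    ∃ π', LRedStar (applyArgs t' as) π'.toTm ∧ SimV br e hbr he π π'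

theorem lrComp : ∀ {κ} {X Y Z : LTm α ar [] κ} {n}, LR br e hbr he n κ X Y →
    GR br e hbr he Y Z → LR br e hbr he n κ X Z := by
  intro κ
  induction κ with
  | o =>
      intro X Y Z n hl hg m hm π hr
      obtain ⟨π₁, p1, p2⟩ := hl m hm π hr
      obtain ⟨π₂, q1, q2⟩ := hg .nil π₁ p1
      exact ⟨π₂, q1, p2.trans q2⟩
  | arr κ₁ κ₂ ih₁ ih₂ =>
      intro X Y Z n hl hg m hm s s' hs
      refine ih₂ (hl m hm s s' hs) ?_
      intro as π hred
      exact hg (.cons s' as) π hred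

def SubRel (n : ℕ) {Γ} (σ σ' : ∀ {κ'}, Lk Γ κ' → LTm α ar [] κ') : Prop :=
  ∀ κ' (x : Lk Γ κ'), LR br e hbr he n κ' (σ x) (σ' x)

theorem fund : ∀ {Γ κ} (u : LTm α ar Γ κ) {n} {σ σ' : ∀ {κ'}, Lk Γ κ' → LTm α ar [] κ'},
    SubRel br e hbr he n σ σ' →
    LR br e hbr he n κ (u.subs (fun x => σ x)) (u.subs (fun x => σ' x)) := by
  intro Γ κ u
  induction u with
  | var x => intro n σ σ' h; exact h _ x
  | lam b ih =>
      intro n σ σ' h m hm s s' hs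
      refine lrHStepSame br e hbr he .beta ?_
      refine lrRStep br e hbr he .beta ?_
      rw [subst1Subs, subst1Subs]
      refine ih ?_
      intro κ' x
      cases x with
      | hd => exact hs
      | tl y => exact lrMono br e hbr he hm (h _ y)
  | app s t ihs iht =>
      intro n σ σ' h
      exact ihs h n (le_refl n) _ _ (iht h)
  | cht =>
      intro n σ σ' h m₁ h₁ s s' hs m₂ h₂ t t' ht
      exact lrChHead br e hbr he .base .base (lrMono br e hbr he h₂ hs) ht
  | fix =>
      intro n σ σ' h m hm f f' hf
      exact lrFix br e hbr he m hf
  | cst a =>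
      intro n σ σ' h
      exact lrCRel br e hbr he _ (CRel.base a)

theorem lrSelf {κ} (t : LTm α ar [] κ) (n : ℕ) : LR br e hbr he n κ t t := by
  have h := fund br e hbr he t (n := n) (σ := fun x => LTm.var x)
    (σ' := fun x => LTm.var x) (fun κ' x => nomatch x)
  rwa [subsVar] at h

end Main

/-! ### The two directions -/

def applyArgsW {τ} : ∀ {κ}, LTm α ar [τ] κ → Args α ar κ → LTm α ar [τ] .o
  | _, t, .nil => t
  | _, t, .cons u as => applyArgsW (.app t (wk u)) as

theorem subst1ApplyArgsW {τ} (N : LTm α ar [] τ) :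
    ∀ {κ} (as : Args α ar κ) (t : LTm α ar [τ] κ),
    subst1 N (applyArgsW t as) = applyArgs (subst1 N t) as := by
  intro κ as
  induction as with
  | nil => intro t; rfl
  | cons u as ih =>
      intro t
      show subst1 N (applyArgsW (.app t (wk u)) as) = _
      rw [ih]
      show applyArgs (LTm.app (subst1 N t) (subst1 N (wk u))) as = _
      rw [subst1Wk]
      rfl

theorem lamAppRed {τ} {B : LTm α ar [τ] .o} {N : LTm α ar [] τ} {v}
    (h : LRed (.app (.lam B) N) v) : v = subst1 N B := by
  cases h with
  | beta => rfl
  | appL h' => cases h'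
  | appR hc _ => exact (noConstHead hc rfl).elim

theorem lamAppNeTree {τ} (B : LTm α ar [τ] .o) (N : LTm α ar [] τ) (π : GTree α ar) :
    LTm.app (.lam B) N ≠ π.toTm := by
  intro h
  obtain ⟨a, f⟩ := π
  have h1 : (none : Option α) = some a := by
    have h2 := congrArg sHead h
    rwa [show sHead (LTm.app (.lam B) N) = none from rfl,
      show (GTree.mk a f).toTm = appN (ar a) (.cst a) (fun i => (f i).toTm) from rfl,
      sHeadAppN, sHeadCst] at h2
  cases h1

end CtxLem


/-- Context lemma for the non-deterministic λY-calculus with tree constants: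
    u ≲ u' holds iff for all closed arguments U₁,…,U_ℓ and every tree π
    reachable from (λx̄.u) U₁ ⋯ U_ℓ there is a tree π' ∼ᵥ π reachable from
    (λx̄.u') U₁ ⋯ U_ℓ. -/
theorem stmt9 {α : Type} {ar : α → Nat} (br e : α) (hbr : ar br = 2)
    (he : ar e = 0) {Γ : List STy} {κ : STy} (u u' : LTm α ar Γ κ) :
    ObsLe br e hbr he u u' ↔
      (∀ (as : Args α ar (foldArr Γ κ)) (π : GTree α ar),
        LRedStar (applyArgs (closeTm Γ u) as) π.toTm →
        ∃ π', LRedStar (applyArgs (closeTm Γ u') as) π'.toTm ∧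
          SimV br e hbr he π π') := by
  constructor
  · -- forward: instantiate the context with λx. x U₁ ⋯ U_ℓ
    intro hObs as π hred
    set M : LTm α ar [] (foldArr Γ κ) := closeTm Γ u with hM
    set M' : LTm α ar [] (foldArr Γ κ) := closeTm Γ u' with hM'
    set B : LTm α ar [foldArr Γ κ] .o := CtxLem.applyArgsW (.var .hd) as with hB
    have hsub : ∀ N : LTm α ar [] (foldArr Γ κ),
        subst1 N B = applyArgs N as := by
      intro N
      rw [hB, CtxLem.subst1ApplyArgsW]
      rfl
    have hCu : LRed (.app (.lam B) M) (applyArgs M as) := by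
      have h0 := hsub M
      exact h0 ▸ LRed.beta
    obtain ⟨π', h1, h2⟩ := hObs (.lam B) π (Relation.ReflTransGen.head hCu hred)
    rcases Relation.ReflTransGen.cases_head h1 with heq | ⟨c, hc1, hc2⟩
    · exact absurd heq (CtxLem.lamAppNeTree _ _ _)
    · have hc : c = subst1 M' B := CtxLem.lamAppRed hc1
      subst hc
      rw [hsub M'] at hc2
      exact ⟨π', hc2, h2⟩
  · -- backward: the context lemma proper
    intro H C π hred
    obtain ⟨m, hm⟩ := CtxLem.starRedN hred
    have hC := CtxLem.lrSelf br e hbr he C m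
    have hMM : CtxLem.LR br e hbr he m (foldArr Γ κ) (closeTm Γ u) (closeTm Γ u') :=
      CtxLem.lrComp br e hbr he (CtxLem.lrSelf br e hbr he (closeTm Γ u) m) H
    have hfin := hC m (le_refl m) _ _ hMM
    obtain ⟨π', p1, p2⟩ := hfin m (le_refl m) π hm
    exact ⟨π', p1, p2⟩
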